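/- arXiv:1312.2980 — 2 statements merged into one kernel-verified Lean document; each statement's English description precedes it below -/
import Mathlib

section
/- Let μ be a probability measure on infinite simple paths in Z^3 starting at y with Σ_{z∈Z^3} μ[{π : z ∈ π}]^2 < ∞. Let φ be a map sending each such path π to an infinite simple path φ(π) in Z^d starting at a fixed point y', with the property that for every x ∈ Z^d there is a set T(x) ⊆ Z^3 with |T(x)| ≤ 7 such that whenever x ∈ φ(π) there exists z ∈ T(x) with z ∈ π, and such that each z ∈ Z^3 lies in T(x) for at most 7·2^d points x ∈ Z^d. Then the pushforward μ∘φ^{-1} satisfies Σ_{x∈Z^d} (μ∘φ^{-1})[{π' : x ∈ π'}]^2 ≤ 2^d·7^2 · Σ_{z∈Z^3} μ[{π : z ∈ π}]^2 < ∞. -/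
open Classical MeasureTheory ENNReal

noncomputable section

lemma enn_two_mul_le_sq (a b : ℝ≥0∞) : 2 * (a * b) ≤ a ^ 2 + b ^ 2 := by
  rcases eq_or_ne a ⊤ with rfl | ha
  · simp [pow_two]
  rcases eq_or_ne b ⊤ with rfl | hb
  · simp [pow_two]
  lift a to NNReal using ha
  lift b to NNReal using hb
  have h : (2 * (a * b) : NNReal) ≤ a ^ 2 + b ^ 2 := by
    rw [← NNReal.coe_le_coe]; push_cast; nlinarith [sq_nonneg ((a : ℝ) - b)]
  exact_mod_cast ENNReal.coe_le_coe.mpr h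

lemma enn_sq_sum_le {α : Type*} (s : Finset α) (f : α → ℝ≥0∞) :
    (∑ i ∈ s, f i) ^ 2 ≤ (s.card : ℝ≥0∞) * ∑ i ∈ s, f i ^ 2 := by
  have h2 : (2 : ℝ≥0∞) * ((∑ i ∈ s, f i) ^ 2) ≤
      2 * ((s.card : ℝ≥0∞) * ∑ i ∈ s, f i ^ 2) := by
    calc (2 : ℝ≥0∞) * ((∑ i ∈ s, f i) ^ 2)
        = ∑ i ∈ s, ∑ j ∈ s, 2 * (f i * f j) := by
          rw [sq, Finset.sum_mul_sum]
          rw [Finset.mul_sum]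
          exact Finset.sum_congr rfl fun i _ => by rw [Finset.mul_sum]
      _ ≤ ∑ i ∈ s, ∑ j ∈ s, (f i ^ 2 + f j ^ 2) := by
          exact Finset.sum_le_sum fun i _ => Finset.sum_le_sum fun j _ =>
            enn_two_mul_le_sq (f i) (f j)
      _ = 2 * ((s.card : ℝ≥0∞) * ∑ i ∈ s, f i ^ 2) := by
          simp only [Finset.sum_add_distrib, Finset.sum_const, nsmul_eq_mul]
          rw [← Finset.mul_sum]
          ring
  exact (ENNReal.mul_le_mul_iff_right (by norm_num) (by norm_num)).mp h2

/-- Vertices of `ℤ^d`. -/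
abbrev Vd (d : ℕ) := Fin d → ℤ

/-- Infinite simple nearest-neighbor paths in `ℤ^d` starting at `y`. -/
def PathFrom (d : ℕ) (y : Vd d) : Type :=
  {π : ℕ → Vd d // π 0 = y ∧ (∀ n, (∑ i, |π (n + 1) i - π n i|) = 1) ∧
    Function.Injective π}

instance (d : ℕ) (y : Vd d) : MeasurableSpace (PathFrom d y) := ⊤

/-- Claim 3.5 of the paper: if `μ` is a finite-energy probability measure on infinite
simple paths in `ℤ³` starting at `y`, and `φ` maps such paths to infinite simple paths
in `ℤ^d` starting at `y'` in such a way that `φ(π)` visits `x` only if `π` visits one of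
at most `7` sites `T(x) ⊆ ℤ³`, each `z ∈ ℤ³` serving for at most `7·2^d` points `x`,
then the pushforward `μ ∘ φ⁻¹` satisfies
`Σ_x (μ∘φ⁻¹)[x ∈ π']² ≤ 2^d·7² · Σ_z μ[z ∈ π]² < ∞`. -/
theorem pushforward_finite_energy (d : ℕ) (hd : 3 ≤ d)
    (y : Vd 3) (y' : Vd d)
    (μ : Measure (PathFrom 3 y)) [IsProbabilityMeasure μ]
    (hμ : (∑' z : Vd 3, (μ {π : PathFrom 3 y | ∃ n, π.1 n = z}) ^ 2) ≠ ⊤)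
    (φ : PathFrom 3 y → PathFrom d y')
    (T : Vd d → Finset (Vd 3))
    (hTcard : ∀ x, (T x).card ≤ 7)
    (hTcover : ∀ (x : Vd d) (π : PathFrom 3 y),
      (∃ n, (φ π).1 n = x) → ∃ z ∈ T x, ∃ n, π.1 n = z)
    (hTdual : ∀ z : Vd 3, {x : Vd d | z ∈ T x}.Finite ∧
      Set.ncard {x : Vd d | z ∈ T x} ≤ 7 * 2 ^ d) :
    (∑' x : Vd d, (μ {π : PathFrom 3 y | ∃ n, (φ π).1 n = x}) ^ 2)
        ≤ (2 ^ d * 7 ^ 2 : ℝ≥0∞) *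
          ∑' z : Vd 3, (μ {π : PathFrom 3 y | ∃ n, π.1 n = z}) ^ 2 ∧
      (∑' x : Vd d, (μ {π : PathFrom 3 y | ∃ n, (φ π).1 n = x}) ^ 2) ≠ ⊤ := by
  set a : Vd 3 → ℝ≥0∞ := fun z => μ {π : PathFrom 3 y | ∃ n, π.1 n = z} with ha
  set b : Vd d → ℝ≥0∞ := fun x => μ {π : PathFrom 3 y | ∃ n, (φ π).1 n = x} with hb
  -- Step 1: pointwise bound b x ≤ ∑_{z ∈ T x} a z
  have hstep1 : ∀ x, b x ≤ ∑ z ∈ T x, a z := by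
    intro x
    have hsub : {π : PathFrom 3 y | ∃ n, (φ π).1 n = x} ⊆
        ⋃ z ∈ T x, {π : PathFrom 3 y | ∃ n, π.1 n = z} := by
      intro π hπ
      obtain ⟨z, hz, hn⟩ := hTcover x π hπ
      exact Set.mem_biUnion hz hn
    exact (measure_mono hsub).trans (measure_biUnion_finset_le _ _)
  -- Step 2: Cauchy–Schwarz
  have hstep2 : ∀ x, b x ^ 2 ≤ 7 * ∑ z ∈ T x, a z ^ 2 := by
    intro x
    calc b x ^ 2 ≤ (∑ z ∈ T x, a z) ^ 2 := pow_le_pow_left' (hstep1 x) 2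
      _ ≤ ((T x).card : ℝ≥0∞) * ∑ z ∈ T x, a z ^ 2 := enn_sq_sum_le _ _
      _ ≤ 7 * ∑ z ∈ T x, a z ^ 2 := by
          gcongr
          exact_mod_cast hTcard x
  -- Step 3: double counting
  have hswap : (∑' x : Vd d, ∑ z ∈ T x, a z ^ 2)
      ≤ (7 * 2 ^ d : ℝ≥0∞) * ∑' z, a z ^ 2 := by
    have h1 : ∀ x : Vd d, (∑ z ∈ T x, a z ^ 2)
        = ∑' z : Vd 3, (if z ∈ T x then a z ^ 2 else 0) := by
      intro x
      rw [tsum_eq_sum (s := T x) (fun z hz => if_neg hz)]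
      exact Finset.sum_congr rfl fun z hz => (if_pos hz).symm
    calc (∑' x : Vd d, ∑ z ∈ T x, a z ^ 2)
        = ∑' x : Vd d, ∑' z : Vd 3, (if z ∈ T x then a z ^ 2 else 0) := by
          exact tsum_congr h1
      _ = ∑' z : Vd 3, ∑' x : Vd d, (if z ∈ T x then a z ^ 2 else 0) :=
          ENNReal.tsum_comm
      _ ≤ ∑' z : Vd 3, (7 * 2 ^ d : ℝ≥0∞) * a z ^ 2 := by
          apply ENNReal.tsum_le_tsum
          intro z
          obtain ⟨hfin, hcard⟩ := hTdual z
          have : (∑' x : Vd d, (if z ∈ T x then a z ^ 2 else 0))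
              = ∑ x ∈ hfin.toFinset, (if z ∈ T x then a z ^ 2 else 0) := by
            apply tsum_eq_sum
            intro x hx
            simp only [Set.Finite.mem_toFinset, Set.mem_setOf_eq] at hx
            exact if_neg hx
          rw [this]
          calc (∑ x ∈ hfin.toFinset, (if z ∈ T x then a z ^ 2 else 0))
              ≤ ∑ x ∈ hfin.toFinset, a z ^ 2 :=
                Finset.sum_le_sum fun x _ => by split <;> simp
            _ = (hfin.toFinset.card : ℝ≥0∞) * a z ^ 2 := by
                rw [Finset.sum_const, nsmul_eq_mul]
            _ ≤ (7 * 2 ^ d : ℝ≥0∞) * a z ^ 2 := by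
                gcongr
                rw [← Set.ncard_eq_toFinset_card _ hfin]
                exact_mod_cast hcard
      _ = (7 * 2 ^ d : ℝ≥0∞) * ∑' z, a z ^ 2 := ENNReal.tsum_mul_left
  have hmain : (∑' x : Vd d, b x ^ 2)
      ≤ (2 ^ d * 7 ^ 2 : ℝ≥0∞) * ∑' z, a z ^ 2 := by
    calc (∑' x : Vd d, b x ^ 2)
        ≤ ∑' x : Vd d, 7 * ∑ z ∈ T x, a z ^ 2 := ENNReal.tsum_le_tsum hstep2
      _ = 7 * ∑' x : Vd d, ∑ z ∈ T x, a z ^ 2 := ENNReal.tsum_mul_left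
      _ ≤ 7 * ((7 * 2 ^ d : ℝ≥0∞) * ∑' z, a z ^ 2) := by gcongr
      _ = (2 ^ d * 7 ^ 2 : ℝ≥0∞) * ∑' z, a z ^ 2 := by ring
  refine ⟨hmain, ?_⟩
  refine ne_top_of_le_ne_top ?_ hmain
  exact ENNReal.mul_ne_top (ENNReal.mul_ne_top (ENNReal.pow_ne_top ENNReal.ofNat_ne_top) (by norm_num)) hμ

end
end

section
/- Let 'bad' be a labeling of Z^3 such that for some constants C₅,C₆ > 0 and all z ∈ Z^3, P[z lies on a simple *-path of bad vertices of length ≥ m] ≤ C₅·e^{−m^{C₆}} for all m ≥ 1. For x bad let B_x be the *-connected bad cluster of x, and set S(x) = ∂*_int(Z^3 \ B_x) if x is bad, S(x) = {x} if x is good. Then sup_{x∈Z^3} Σ_{z ≠ x} P[S(x) ∩ S(z) ≠ ∅] < ∞, because S(0) ∩ S(z) ≠ ∅ forces either 0 or z to lie on a simple *-path of bad vertices of length at least ⌊|z|_∞ − 1⌋/2, whence P[S(0)∩S(z) ≠ ∅] ≤ 2C₅·e^{−(⌊|z|_∞−1⌋/2)^{C₆}}. -/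
open Classical MeasureTheory ENNReal

noncomputable section

/-- Vertices of `ℤ³`. -/
abbrev V3 : Type := Fin 3 → ℤ

/-- `x` and `y` are `*`-neighbors (ℓ∞-distance 1). -/
def StarAdj (x y : V3) : Prop := x ≠ y ∧ ∀ i, |x i - y i| ≤ 1

/-- `x` lies on a simple `*`-path of `bad` vertices with at least `m` vertices. -/
def OnBadStarPath (bad : V3 → Prop) (x : V3) (m : ℕ) : Prop :=
  ∃ (n : ℕ) (p : ℕ → V3), m ≤ n + 1 ∧
    (∀ i j, i ≤ n → j ≤ n → p i = p j → i = j) ∧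
    (∀ i < n, StarAdj (p i) (p (i + 1))) ∧
    (∀ i ≤ n, bad (p i)) ∧ ∃ i ≤ n, p i = x

/-- The `*`-connected bad cluster of `x` (empty if `x` is good). -/
def badCluster (bad : V3 → Prop) (x : V3) : Set V3 :=
  {y | ∃ (n : ℕ) (p : ℕ → V3), p 0 = x ∧ p n = y ∧
    (∀ i < n, StarAdj (p i) (p (i + 1))) ∧ ∀ i ≤ n, bad (p i)}

/-- `S(x)`: the interior `*`-boundary of `ℤ³ \ B_x` if `x` is bad, and `{x}` if `x`
is good. -/
def Sset (bad : V3 → Prop) (x : V3) : Set V3 :=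
  if bad x then
    {y | y ∉ badCluster bad x ∧ ∃ z ∈ badCluster bad x, StarAdj y z}
  else {x}

/-- The ℓ∞-norm of `z ∈ ℤ³`. -/
def linf (z : V3) : ℤ := max |z 0| (max |z 1| |z 2|)

/-! ### Auxiliary lemmas -/

lemma summable_exp_neg_mul_rpow {b c : ℝ} (hb : 0 < b) (hc : 0 < c) :
    Summable (fun k : ℕ => Real.exp (-(b * (k : ℝ) ^ c))) := by
  apply summable_of_isBigO_nat (Real.summable_nat_rpow.2 (by norm_num : (-2:ℝ) < -1))
  rw [Asymptotics.isBigO_iff]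
  refine ⟨1, ?_⟩
  have h1 : ∀ᶠ x : ℝ in Filter.atTop, |Real.log x| ≤ (b/2) * |x ^ c| :=
    (isLittleO_log_rpow_atTop hc).bound (by linarith)
  have h2 := (tendsto_natCast_atTop_atTop (R := ℝ)).eventually
    (h1.and (Filter.eventually_ge_atTop (1:ℝ)))
  filter_upwards [h2] with k hk
  obtain ⟨hlog, hk1⟩ := hk
  have hkpos : (0:ℝ) < k := lt_of_lt_of_le zero_lt_one hk1
  have hrp : (0:ℝ) ≤ (k:ℝ) ^ c := Real.rpow_nonneg hkpos.le c
  rw [abs_of_nonneg (Real.log_nonneg hk1), abs_of_nonneg hrp] at hlog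
  have key : 2 * Real.log k ≤ b * (k:ℝ) ^ c := by nlinarith
  have hle : Real.exp (-(b * (k:ℝ)^c)) ≤ (k:ℝ) ^ (-2:ℝ) := by
    have e2 : (k:ℝ) ^ (-2:ℝ) = Real.exp (Real.log k * (-2)) := Real.rpow_def_of_pos hkpos _
    rw [e2]
    apply Real.exp_le_exp.2
    linarith
  rw [Real.norm_of_nonneg (Real.exp_nonneg _), one_mul, Real.norm_of_nonneg (Real.rpow_nonneg hkpos.le _)]
  exact hle

lemma displacement (p : ℕ → V3) : ∀ n : ℕ, (∀ i < n, StarAdj (p i) (p (i + 1))) →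
    ∀ j : Fin 3, |p n j - p 0 j| ≤ (n : ℤ) := by
  intro n
  induction n with
  | zero => intro _ j; simp
  | succ n ih =>
    intro hadj j
    have h1 := ih (fun i hi => hadj i (Nat.lt_succ_of_lt hi)) j
    have h2 := (hadj n (Nat.lt_succ_self n)).2 j
    have h3 : |p (n+1) j - p 0 j| ≤ |p (n+1) j - p n j| + |p n j - p 0 j| := by
      have := abs_add_le (p (n+1) j - p n j) (p n j - p 0 j)
      simpa using this
    rw [abs_sub_comm] at h2
    push_cast
    omega

lemma exists_simple_path (bad : V3 → Prop) :
    ∀ n : ℕ, ∀ p : ℕ → V3, (∀ i < n, StarAdj (p i) (p (i + 1))) → (∀ i ≤ n, bad (p i)) →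
    ∃ (n' : ℕ) (q : ℕ → V3), q 0 = p 0 ∧ q n' = p n ∧
      (∀ i j, i ≤ n' → j ≤ n' → q i = q j → i = j) ∧
      (∀ i < n', StarAdj (q i) (q (i + 1))) ∧ (∀ i ≤ n', bad (q i)) := by
  intro n
  induction n using Nat.strong_induction_on with
  | _ n ih =>
    intro p hadj hbad
    by_cases hinj : ∀ i j, i ≤ n → j ≤ n → p i = p j → i = j
    · exact ⟨n, p, rfl, rfl, hinj, hadj, hbad⟩
    · push_neg at hinj
      obtain ⟨i₀, j₀, hi₀, hj₀, heq₀, hne₀⟩ := hinj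
      set i := min i₀ j₀ with hidef
      set j := max i₀ j₀ with hjdef
      have hij : i < j := by omega
      have hjn : j ≤ n := by omega
      have heq : p i = p j := by
        rcases le_total i₀ j₀ with hc | hc
        · rw [hidef, hjdef, min_eq_left hc, max_eq_right hc]; exact heq₀
        · rw [hidef, hjdef, min_eq_right hc, max_eq_left hc]; exact heq₀.symm
      clear_value i j
      clear hidef hjdef heq₀ hne₀ hi₀ hj₀
      obtain ⟨d, hddef⟩ : ∃ d, d = j - i := ⟨_, rfl⟩
      obtain ⟨n', hn'def⟩ : ∃ n', n' = n - d := ⟨_, rfl⟩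
      have hd1 : 1 ≤ d := by omega
      have hin' : i ≤ n' := by omega
      set q : ℕ → V3 := fun k => if k ≤ i then p k else p (k + d) with hq
      have hq0 : q 0 = p 0 := by simp [hq]
      have hqn : q n' = p n := by
        by_cases hc : n' ≤ i
        · have h1 : n' = i := le_antisymm hc hin'
          have h2 : j = n := by omega
          simp only [hq, h1, le_refl, if_pos]
          rw [heq, h2]
        · simp only [hq, if_neg hc]
          have e : n' + d = n := by omega
          rw [e]
      have hqadj : ∀ k < n', StarAdj (q k) (q (k + 1)) := by
        intro k hk
        by_cases h1 : k + 1 ≤ i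
        · simp only [hq, if_pos (by omega : k ≤ i), if_pos h1]
          exact hadj k (by omega)
        · by_cases h2 : k ≤ i
          · have hki : k = i := by omega
            simp only [hq, if_pos h2, if_neg h1]
            have e1 : k + 1 + d = j + 1 := by omega
            rw [e1, hki, heq]
            exact hadj j (by omega)
          · simp only [hq, if_neg h2, if_neg h1]
            have e1 : k + 1 + d = k + d + 1 := by omega
            rw [e1]
            exact hadj (k + d) (by omega)
      have hqbad : ∀ k ≤ n', bad (q k) := by
        intro k hk
        by_cases h2 : k ≤ i
        · simp only [hq, if_pos h2]; exact hbad k (by omega)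
        · simp only [hq, if_neg h2]; exact hbad (k + d) (by omega)
      obtain ⟨m, r, hr0, hrm, hrinj, hradj, hrbad⟩ := ih n' (by omega) q hqadj hqbad
      exact ⟨m, r, hr0.trans hq0, hrm.trans hqn, hrinj, hradj, hrbad⟩

lemma linf_coord_le (w : V3) (j : Fin 3) : |w j| ≤ linf w := by
  fin_cases j
  · exact le_max_left _ _
  · exact le_trans (le_max_left _ _) (le_max_right _ _)
  · exact le_trans (le_max_right _ _) (le_max_right _ _)

lemma linf_le_of (w : V3) (B : ℤ) (hb : ∀ j, |w j| ≤ B) : linf w ≤ B :=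
  max_le (hb 0) (max_le (hb 1) (hb 2))

lemma one_le_linf {w : V3} (hw : w ≠ 0) : 1 ≤ linf w := by
  have : ∃ j : Fin 3, w j ≠ 0 := by
    by_contra hc
    push_neg at hc
    exact hw (funext fun j => hc j)
  obtain ⟨j, hj⟩ := this
  calc (1:ℤ) ≤ |w j| := Int.one_le_abs hj
    _ ≤ linf w := linf_coord_le w j

lemma cluster_to_simple {bad : V3 → Prop} {a b : V3} (hb : b ∈ badCluster bad a) :
    ∃ (n : ℕ), (∀ j : Fin 3, |b j - a j| ≤ (n : ℤ)) ∧ ∀ m ≤ n + 1, OnBadStarPath bad a m := by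
  obtain ⟨n, p, hp0, hpn, hadj, hbad⟩ := hb
  obtain ⟨n', q, hq0, hqn, hinj, hqadj, hqbad⟩ := exists_simple_path bad n p hadj hbad
  refine ⟨n', fun j => ?_, fun m hm => ⟨n', q, hm, hinj, hqadj, hqbad, 0, Nat.zero_le _, hq0.trans hp0⟩⟩
  have := displacement q n' hqadj j
  rw [hqn, hq0, hpn, hp0] at this
  exact this

lemma key_lemma (bad : V3 → Prop) (x z : V3) (hzx : z ≠ x)
    (hne : (Sset bad x ∩ Sset bad z).Nonempty) :
    OnBadStarPath bad x (((linf (z - x)).toNat + 1) / 2) ∨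
    OnBadStarPath bad z (((linf (z - x)).toNat + 1) / 2) := by
  set L : ℤ := linf (z - x) with hLdef
  have hL1 : 1 ≤ L := one_le_linf (fun hc => hzx (by
    funext j
    have := congrFun hc j
    simp only [Pi.sub_apply, Pi.zero_apply] at this
    omega))
  have hLle : ∀ B : ℤ, (∀ j : Fin 3, |z j - x j| ≤ B) → L ≤ B := fun B hb =>
    linf_le_of _ B (fun j => by simpa using hb j)
  obtain ⟨y, hyx, hyz⟩ := hne
  by_cases hbx : bad x <;> by_cases hbz : bad z
  · rw [Sset, if_pos hbx] at hyx
    rw [Sset, if_pos hbz] at hyz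
    obtain ⟨-, x₀, hx₀c, hx₀a⟩ := hyx
    obtain ⟨-, x₁, hx₁c, hx₁a⟩ := hyz
    obtain ⟨na, hnaco, hpa⟩ := cluster_to_simple hx₀c
    obtain ⟨nb, hnbco, hpb⟩ := cluster_to_simple hx₁c
    have hco : ∀ j : Fin 3, |z j - x j| ≤ (na : ℤ) + nb + 2 := by
      intro j
      have h1 := hnaco j
      have h2 := hnbco j
      have h3 := hx₀a.2 j
      have h4 := hx₁a.2 j
      rw [abs_le] at h1 h2 h3 h4 ⊢
      omega
    have hLb : L ≤ (na : ℤ) + nb + 2 := hLle _ hco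
    rcases le_total na nb with hab | hab
    · exact Or.inr (hpb _ (by omega))
    · exact Or.inl (hpa _ (by omega))
  · rw [Sset, if_pos hbx] at hyx
    rw [Sset, if_neg hbz] at hyz
    have hy : y = z := hyz
    subst hy
    obtain ⟨-, x₀, hx₀c, hx₀a⟩ := hyx
    obtain ⟨na, hnaco, hpa⟩ := cluster_to_simple hx₀c
    have hLb : L ≤ (na : ℤ) + 1 := hLle _ (fun j => by
      have h1 := hnaco j
      have h2 := hx₀a.2 j
      rw [abs_le] at h1 h2 ⊢
      omega)
    exact Or.inl (hpa _ (by omega))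
  · rw [Sset, if_neg hbx] at hyx
    rw [Sset, if_pos hbz] at hyz
    have hy : y = x := hyx
    subst hy
    obtain ⟨-, x₁, hx₁c, hx₁a⟩ := hyz
    obtain ⟨nb, hnbco, hpb⟩ := cluster_to_simple hx₁c
    have hLb : L ≤ (nb : ℤ) + 1 := hLle _ (fun j => by
      have h1 := hnbco j
      have h2 := hx₁a.2 j
      rw [abs_le] at h1 h2 ⊢
      omega)
    exact Or.inr (hpb _ (by omega))
  · rw [Sset, if_neg hbx] at hyx
    rw [Sset, if_neg hbz] at hyz
    exact absurd ((Set.eq_of_mem_singleton hyz).symm.trans (Set.eq_of_mem_singleton hyx)) hzx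

lemma prob_bound {Ω : Type*} [MeasurableSpace Ω]
    (P : Measure Ω) (bad : Ω → V3 → Prop)
    (C₅ C₆ : ℝ) (hC₅ : 0 < C₅) (hC₆ : 0 < C₆)
    (h : ∀ (z : V3) (m : ℕ), 1 ≤ m →
      P {ω | OnBadStarPath (bad ω) z m} ≤ ENNReal.ofReal (C₅ * Real.exp (-(m : ℝ) ^ C₆)))
    (x z : V3) (hzx : z ≠ x) :
    P {ω | (Sset (bad ω) x ∩ Sset (bad ω) z).Nonempty}
      ≤ ENNReal.ofReal (2 * C₅ * Real.exp (-(((linf (z - x) : ℝ) - 1) / 2) ^ C₆)) := by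
  set L : ℤ := linf (z - x) with hLdef
  have hL1 : 1 ≤ L := one_le_linf (fun hc => hzx (by
    funext j
    have := congrFun hc j
    simp only [Pi.sub_apply, Pi.zero_apply] at this
    omega))
  set m : ℕ := (L.toNat + 1) / 2 with hmdef
  have hm1 : 1 ≤ m := by omega
  have hsub : {ω | (Sset (bad ω) x ∩ Sset (bad ω) z).Nonempty} ⊆
      {ω | OnBadStarPath (bad ω) x m} ∪ {ω | OnBadStarPath (bad ω) z m} := by
    intro ω hω
    exact key_lemma (bad ω) x z hzx hω
  calc P {ω | (Sset (bad ω) x ∩ Sset (bad ω) z).Nonempty}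
      ≤ P ({ω | OnBadStarPath (bad ω) x m} ∪ {ω | OnBadStarPath (bad ω) z m}) :=
        measure_mono hsub
    _ ≤ P {ω | OnBadStarPath (bad ω) x m} + P {ω | OnBadStarPath (bad ω) z m} :=
        measure_union_le _ _
    _ ≤ ENNReal.ofReal (C₅ * Real.exp (-(m : ℝ) ^ C₆))
        + ENNReal.ofReal (C₅ * Real.exp (-(m : ℝ) ^ C₆)) :=
        add_le_add (h x m hm1) (h z m hm1)
    _ = ENNReal.ofReal (C₅ * Real.exp (-(m : ℝ) ^ C₆) + C₅ * Real.exp (-(m : ℝ) ^ C₆)) := by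
        rw [ENNReal.ofReal_add] <;> positivity
    _ ≤ ENNReal.ofReal (2 * C₅ * Real.exp (-(((L : ℝ) - 1) / 2) ^ C₆)) := by
        apply ENNReal.ofReal_le_ofReal
        have hmL : ((L : ℝ) - 1) / 2 ≤ (m : ℝ) := by
          have : (L : ℤ) - 1 ≤ 2 * (m : ℤ) := by
            have : L.toNat = L := Int.toNat_of_nonneg (by omega)
            omega
          have hcast : ((L : ℝ) - 1) ≤ 2 * (m : ℝ) := by exact_mod_cast this
          linarith
        have hLnn : (0:ℝ) ≤ ((L : ℝ) - 1) / 2 := by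
          have : (1:ℝ) ≤ (L:ℝ) := by exact_mod_cast hL1
          linarith
        have hrpow : (((L : ℝ) - 1) / 2) ^ C₆ ≤ (m : ℝ) ^ C₆ :=
          Real.rpow_le_rpow hLnn hmL hC₆.le
        have hexp : Real.exp (-(m : ℝ) ^ C₆) ≤ Real.exp (-(((L : ℝ) - 1) / 2) ^ C₆) :=
          Real.exp_le_exp.2 (by linarith)
        nlinarith [Real.exp_nonneg (-(m : ℝ) ^ C₆), Real.exp_nonneg (-(((L : ℝ) - 1) / 2) ^ C₆)]

/-- coordinates equivalence -/
def e3 : ℤ × ℤ × ℤ ≃ V3 :=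
  ⟨fun p => ![p.1, p.2.1, p.2.2], fun w => (w 0, w 1, w 2),
   fun p => rfl, fun w => by funext i; fin_cases i <;> rfl⟩

/-- single-variable summand -/
def hfun (C₆ : ℝ) (n : ℤ) : ℝ :=
  Real.exp (-((((max 1 |n| : ℤ) : ℝ) - 1) / 2) ^ C₆ / 3)

lemma hfun_nonneg (C₆ : ℝ) (n : ℤ) : 0 ≤ hfun C₆ n := Real.exp_nonneg _

lemma hfun_summable {C₆ : ℝ} (hC₆ : 0 < C₆) : Summable (fun n : ℤ => hfun C₆ n) := by
  have hnat : Summable (fun k : ℕ => hfun C₆ (k : ℤ)) := by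
    rw [← summable_nat_add_iff 4]
    set b : ℝ := (1/2 : ℝ) ^ C₆ / 3 with hbdef
    have hb : 0 < b := by
      have := Real.rpow_pos_of_pos (by norm_num : (0:ℝ) < 1/2) C₆
      positivity
    apply Summable.of_nonneg_of_le (fun k => hfun_nonneg C₆ _)
      (fun k => ?_) (summable_exp_neg_mul_rpow hb hC₆)
    have hmax : (max 1 |(((k + 4 : ℕ)) : ℤ)| : ℤ) = (k : ℤ) + 4 := by
      push_cast
      rw [abs_of_nonneg (by positivity : (0:ℤ) ≤ (k:ℤ) + 4)]
      omega
    unfold hfun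
    rw [hmax]
    apply Real.exp_le_exp.2
    have h1 : ((((k : ℤ) + 4 : ℤ) : ℝ) - 1) / 2 = ((k:ℝ) + 3) / 2 := by push_cast; ring
    rw [h1]
    have h2 : (1/2 : ℝ) * (k:ℝ) ≤ ((k:ℝ) + 3) / 2 := by linarith
    have h3 : ((1/2 : ℝ) * (k:ℝ)) ^ C₆ ≤ (((k:ℝ) + 3) / 2) ^ C₆ :=
      Real.rpow_le_rpow (by positivity) h2 hC₆.le
    have h4 : ((1/2 : ℝ) * (k:ℝ)) ^ C₆ = (1/2:ℝ) ^ C₆ * (k:ℝ) ^ C₆ :=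
      Real.mul_rpow (by norm_num) (Nat.cast_nonneg k)
    rw [hbdef]
    have h5 : (1/2:ℝ)^C₆/3 * (k:ℝ)^C₆ = ((1/2:ℝ)*(k:ℝ))^C₆/3 := by rw [h4]; ring
    rw [h5]
    linarith
  apply Summable.of_nat_of_neg hnat
  have : (fun k : ℕ => hfun C₆ (-(k : ℤ))) = fun k : ℕ => hfun C₆ (k : ℤ) := by
    funext k
    unfold hfun
    rw [abs_neg]
  rw [this]
  exact hnat

/-- Lemma 5.2 key estimate: under stretched-exponential decay of long bad `*`-paths,
`P[S(0) ∩ S(z) ≠ ∅]` decays stretched-exponentially in `|z|_∞` (because the event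
forces `0` or `z` to lie on a bad `*`-path of length at least `⌊|z|_∞ − 1⌋/2`),
and consequently `sup_x Σ_{z ≠ x} P[S(x) ∩ S(z) ≠ ∅] < ∞`. -/
theorem S_intersection_summable {Ω : Type*} [MeasurableSpace Ω]
    (P : Measure Ω) [IsProbabilityMeasure P] (bad : Ω → V3 → Prop)
    (C₅ C₆ : ℝ) (hC₅ : 0 < C₅) (hC₆ : 0 < C₆)
    (h : ∀ (z : V3) (m : ℕ), 1 ≤ m →
      P {ω | OnBadStarPath (bad ω) z m} ≤ ENNReal.ofReal (C₅ * Real.exp (-(m : ℝ) ^ C₆))) :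
    (∀ z : V3, z ≠ 0 →
      P {ω | (Sset (bad ω) 0 ∩ Sset (bad ω) z).Nonempty}
        ≤ ENNReal.ofReal
            (2 * C₅ * Real.exp (-(((linf z : ℝ) - 1) / 2) ^ C₆))) ∧
    ∃ M : ℝ≥0∞, M ≠ ⊤ ∧ ∀ x : V3,
      (∑' z : V3, if z = x then 0
        else P {ω | (Sset (bad ω) x ∩ Sset (bad ω) z).Nonempty}) ≤ M := by
  constructor
  · intro z hz
    have := prob_bound P bad C₅ C₆ hC₅ hC₆ h 0 z hz
    simpa using this
  · -- the dominating function
    set F : V3 → ℝ≥0∞ := fun w => if w = 0 then 0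
      else ENNReal.ofReal (2 * C₅ * Real.exp (-(((linf w : ℝ) - 1) / 2) ^ C₆)) with hFdef
    set g : ℤ → ℝ≥0∞ := fun n => ENNReal.ofReal (hfun C₆ n) with hgdef
    set S : ℝ≥0∞ := ∑' n : ℤ, g n with hSdef
    have hS : S ≠ ⊤ := by
      rw [hSdef, hgdef, ← ENNReal.ofReal_tsum_of_nonneg (hfun_nonneg C₆) (hfun_summable hC₆)]
      exact ENNReal.ofReal_ne_top
    have hK : (ENNReal.ofReal (2 * C₅)) ≠ ⊤ := ENNReal.ofReal_ne_top
    refine ⟨ENNReal.ofReal (2 * C₅) * (S * (S * S)), by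
      exact ENNReal.mul_ne_top hK (ENNReal.mul_ne_top hS (ENNReal.mul_ne_top hS hS)), ?_⟩
    intro x
    -- pointwise bound by F (z - x)
    have hpt : ∀ z : V3, (if z = x then 0
        else P {ω | (Sset (bad ω) x ∩ Sset (bad ω) z).Nonempty}) ≤ F (z - x) := by
      intro z
      by_cases hz : z = x
      · simp [hz, hFdef]
      · have hzx : z - x ≠ 0 := sub_ne_zero.2 hz
        rw [if_neg hz, hFdef]
        simp only [if_neg hzx]
        exact prob_bound P bad C₅ C₆ hC₅ hC₆ h x z hz
    have hsum1 : (∑' z : V3, if z = x then 0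
        else P {ω | (Sset (bad ω) x ∩ Sset (bad ω) z).Nonempty}) ≤ ∑' z : V3, F (z - x) :=
      ENNReal.tsum_le_tsum hpt
    have hsum2 : (∑' z : V3, F (z - x)) = ∑' w : V3, F w := by
      exact (Equiv.subRight x).tsum_eq F
    -- bound F pointwise by product
    have hF_le : ∀ w : V3, F w ≤ ENNReal.ofReal (2 * C₅) * (g (w 0) * (g (w 1) * g (w 2))) := by
      intro w
      by_cases hw : w = 0
      · simp [hFdef, hw]
      · rw [hFdef]
        simp only [if_neg hw]
        have hL1 : 1 ≤ linf w := one_le_linf hw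
        have hLr : (1:ℝ) ≤ (linf w : ℝ) := by exact_mod_cast hL1
        have hcoord : ∀ j : Fin 3, (((max 1 |w j| : ℤ) : ℝ) - 1) / 2 ≤ ((linf w : ℝ) - 1) / 2 := by
          intro j
          have h1 : (max 1 |w j| : ℤ) ≤ linf w := by
            have := linf_coord_le w j
            omega
          have : ((max 1 |w j| : ℤ) : ℝ) ≤ (linf w : ℝ) := by exact_mod_cast h1
          linarith
        have hbase : ∀ j : Fin 3, (0:ℝ) ≤ (((max 1 |w j| : ℤ) : ℝ) - 1) / 2 := by
          intro j
          have h1 : (1:ℤ) ≤ max 1 |w j| := le_max_left _ _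
          have : (1:ℝ) ≤ ((max 1 |w j| : ℤ) : ℝ) := by exact_mod_cast h1
          linarith
        have hrp : ∀ j : Fin 3, ((((max 1 |w j| : ℤ) : ℝ) - 1) / 2) ^ C₆
            ≤ (((linf w : ℝ) - 1) / 2) ^ C₆ := fun j =>
          Real.rpow_le_rpow (hbase j) (hcoord j) hC₆.le
        have hprod : Real.exp (-(((linf w : ℝ) - 1) / 2) ^ C₆)
            ≤ hfun C₆ (w 0) * (hfun C₆ (w 1) * hfun C₆ (w 2)) := by
          unfold hfun
          rw [← Real.exp_add, ← Real.exp_add]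
          apply Real.exp_le_exp.2
          have h0 := hrp 0
          have h1 := hrp 1
          have h2 := hrp 2
          linarith
        calc ENNReal.ofReal (2 * C₅ * Real.exp (-(((linf w : ℝ) - 1) / 2) ^ C₆))
            ≤ ENNReal.ofReal (2 * C₅ * (hfun C₆ (w 0) * (hfun C₆ (w 1) * hfun C₆ (w 2)))) := by
              apply ENNReal.ofReal_le_ofReal
              have h2C : (0:ℝ) ≤ 2 * C₅ := by linarith
              exact mul_le_mul_of_nonneg_left hprod h2C
          _ = ENNReal.ofReal (2 * C₅) * (g (w 0) * (g (w 1) * g (w 2))) := by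
              rw [hgdef]
              rw [ENNReal.ofReal_mul (by linarith : (0:ℝ) ≤ 2 * C₅),
                ENNReal.ofReal_mul (hfun_nonneg C₆ (w 0)),
                ENNReal.ofReal_mul (hfun_nonneg C₆ (w 1))]
    -- sum of the product factorizes
    have hfact : (∑' w : V3, ENNReal.ofReal (2 * C₅) * (g (w 0) * (g (w 1) * g (w 2))))
        = ENNReal.ofReal (2 * C₅) * (S * (S * S)) := by
      rw [ENNReal.tsum_mul_left]
      congr 1
      rw [← e3.tsum_eq (fun w => g (w 0) * (g (w 1) * g (w 2)))]
      have he : ∀ p : ℤ × ℤ × ℤ, g ((e3 p) 0) * (g ((e3 p) 1) * g ((e3 p) 2))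
          = g p.1 * (g p.2.1 * g p.2.2) := by
        intro p
        rfl
      simp only [he]
      rw [ENNReal.tsum_prod']
      rw [hSdef]
      calc (∑' a : ℤ, ∑' q : ℤ × ℤ, g a * (g q.1 * g q.2))
          = ∑' a : ℤ, g a * ∑' q : ℤ × ℤ, (g q.1 * g q.2) := by
            congr 1; funext a; rw [ENNReal.tsum_mul_left]
        _ = (∑' q : ℤ × ℤ, (g q.1 * g q.2)) * ∑' a : ℤ, g a := by
            rw [ENNReal.tsum_mul_right]; ring
        _ = ((∑' b : ℤ, g b) * (∑' c : ℤ, g c)) * ∑' a : ℤ, g a := by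
            congr 1
            rw [ENNReal.tsum_prod']
            simp only [ENNReal.tsum_mul_left, ENNReal.tsum_mul_right]
        _ = (∑' a : ℤ, g a) * ((∑' b : ℤ, g b) * (∑' c : ℤ, g c)) := by ring
    calc (∑' z : V3, if z = x then 0
        else P {ω | (Sset (bad ω) x ∩ Sset (bad ω) z).Nonempty})
        ≤ ∑' z : V3, F (z - x) := hsum1
      _ = ∑' w : V3, F w := hsum2
      _ ≤ ∑' w : V3, ENNReal.ofReal (2 * C₅) * (g (w 0) * (g (w 1) * g (w 2))) :=
          ENNReal.tsum_le_tsum hF_le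
      _ = ENNReal.ofReal (2 * C₅) * (S * (S * S)) := hfact

end
end
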